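/- arXiv:2404.16277 — 3 statements merged into one kernel-verified Lean document; each statement's English description precedes it below -/
import Mathlib

section
/- Let m and o be positive natural numbers, w_c ∈ ℝ^m, γ ∈ ℝ^o, c > 0 and z_sup > 0, with ‖γ‖ ≤ c/(2·z_sup). Let (Ω, F, μ) be a probability space and let Z_c : Ω → ℝ^m, Z_e : Ω → ℝ^o, η : Ω → Bool be measurable with |⟨w_c, Z_c(ω)⟩| ≥ c and ‖Z_e(ω)‖ ≤ z_sup for all ω. Define the label Y(ω) = (decide(⟨w_c, Z_c(ω)⟩ ≥ 0)) XOR η(ω), the invariant classifier ĝ_0(ω) = decide(⟨w_c, Z_c(ω)⟩ ≥ 0), and the spurious classifier ĝ_γ(ω) = decide(⟨w_c, Z_c(ω)⟩ + ⟨γ, Z_e(ω)⟩ ≥ 0). Then for every ω ∈ Ω, Y(ω) ≠ ĝ_γ(ω) if and only if η(ω) = true; consequently μ{ω : Y(ω) ≠ ĝ_γ(ω)} = μ{ω : η(ω) = true} = μ{ω : Y(ω) ≠ ĝ_0(ω)}. -/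
open scoped RealInnerProductSpace
open MeasureTheory

/-- The spurious classifier `ĝ_γ` misclassifies exactly on the label-noise event,
so its risk equals the noise rate, which is also the risk of the invariant classifier `ĝ_0`. -/
theorem spurious_classifier_risk (m o : ℕ) (hm : 0 < m) (ho : 0 < o)
    (w_c : EuclideanSpace ℝ (Fin m)) (γ : EuclideanSpace ℝ (Fin o))
    (c z_sup : ℝ) (hc : 0 < c) (hz : 0 < z_sup)
    (hγ : ‖γ‖ ≤ c / (2 * z_sup))
    (Ω : Type*) [MeasurableSpace Ω] (μ : Measure Ω) [IsProbabilityMeasure μ]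
    (Z_c : Ω → EuclideanSpace ℝ (Fin m)) (Z_e : Ω → EuclideanSpace ℝ (Fin o)) (η : Ω → Bool)
    (hZc : Measurable Z_c) (hZe : Measurable Z_e) (hη : Measurable η)
    (hmargin : ∀ ω, |⟪w_c, Z_c ω⟫| ≥ c) (hbound : ∀ ω, ‖Z_e ω‖ ≤ z_sup) :
    (∀ ω,
      (xor (decide ((0:ℝ) ≤ ⟪w_c, Z_c ω⟫)) (η ω)
          ≠ decide ((0:ℝ) ≤ ⟪w_c, Z_c ω⟫ + ⟪γ, Z_e ω⟫)) ↔ η ω = true) ∧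
    μ {ω | xor (decide ((0:ℝ) ≤ ⟪w_c, Z_c ω⟫)) (η ω)
          ≠ decide ((0:ℝ) ≤ ⟪w_c, Z_c ω⟫ + ⟪γ, Z_e ω⟫)}
      = μ {ω | η ω = true} ∧
    μ {ω | η ω = true}
      = μ {ω | xor (decide ((0:ℝ) ≤ ⟪w_c, Z_c ω⟫)) (η ω)
          ≠ decide ((0:ℝ) ≤ ⟪w_c, Z_c ω⟫)} := by
  have hsign : ∀ ω, decide ((0:ℝ) ≤ ⟪w_c, Z_c ω⟫ + ⟪γ, Z_e ω⟫)
      = decide ((0:ℝ) ≤ ⟪w_c, Z_c ω⟫) := by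
    intro ω
    have hp : |⟪γ, Z_e ω⟫| ≤ c / 2 := by
      calc |⟪γ, Z_e ω⟫| ≤ ‖γ‖ * ‖Z_e ω‖ := abs_real_inner_le_norm _ _
        _ ≤ (c / (2 * z_sup)) * z_sup := by
            apply mul_le_mul hγ (hbound ω) (norm_nonneg _)
            positivity
        _ = c / 2 := by field_simp
    have hm := hmargin ω
    rcases le_or_gt 0 ⟪w_c, Z_c ω⟫ with h | h
    · have : (0:ℝ) ≤ ⟪w_c, Z_c ω⟫ + ⟪γ, Z_e ω⟫ := by
        have : c ≤ ⟪w_c, Z_c ω⟫ := by rwa [abs_of_nonneg h] at hm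
        nlinarith [abs_le.mp hp]
      rw [decide_eq_decide]; exact iff_of_true this h
    · have : ¬ (0:ℝ) ≤ ⟪w_c, Z_c ω⟫ + ⟪γ, Z_e ω⟫ := by
        have : c ≤ -⟪w_c, Z_c ω⟫ := by rwa [abs_of_neg h] at hm
        push_neg
        nlinarith [abs_le.mp hp]
      rw [decide_eq_decide]; exact iff_of_false this h.not_ge
  have hxor : ∀ (b e : Bool), (xor b e ≠ b) ↔ e = true := by decide
  have key : ∀ ω,
      (xor (decide ((0:ℝ) ≤ ⟪w_c, Z_c ω⟫)) (η ω)
          ≠ decide ((0:ℝ) ≤ ⟪w_c, Z_c ω⟫ + ⟪γ, Z_e ω⟫)) ↔ η ω = true := by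
    intro ω; rw [hsign ω]; exact hxor _ _
  refine ⟨key, ?_, ?_⟩
  · congr 1; ext ω; simpa using key ω
  · congr 1; ext ω; simp only [Set.mem_setOf_eq]
    exact ((hxor _ _).symm)
end

section
/- Let m and o be positive natural numbers, w_c ∈ ℝ^m, c > 0 and z_sup > 0. Then there exists γ ∈ ℝ^o with γ ≠ 0 such that for every probability space (Ω, F, μ) and all measurable Z_c : Ω → ℝ^m, Z_e : Ω → ℝ^o, η : Ω → Bool satisfying |⟨w_c, Z_c(ω)⟩| ≥ c and ‖Z_e(ω)‖ ≤ z_sup for all ω, the classifier ĝ_γ(ω) = decide(⟨w_c, Z_c(ω)⟩ + ⟨γ, Z_e(ω)⟩ ≥ 0), which places nonzero weight on the spurious feature Z_e, achieves risk μ{ω : Y(ω) ≠ ĝ_γ(ω)} = μ{ω : η(ω) = true} for the label Y(ω) = (decide(⟨w_c, Z_c(ω)⟩ ≥ 0)) XOR η(ω); i.e., it is Bayes optimal (its error equals the label noise rate) in every such environment. -/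
open scoped RealInnerProductSpace
open MeasureTheory

/-- There exists a nonzero spurious weight `γ` such that the classifier using
score `⟨w_c, Z_c⟩ + ⟨γ, Z_e⟩` is Bayes optimal (risk = label-noise rate) in every environment
satisfying the margin and boundedness conditions. -/
theorem exists_spurious_bayes_optimal (m o : ℕ) (hm : 0 < m) (ho : 0 < o)
    (w_c : EuclideanSpace ℝ (Fin m)) (c z_sup : ℝ) (hc : 0 < c) (hz : 0 < z_sup) :
    ∃ γ : EuclideanSpace ℝ (Fin o), γ ≠ 0 ∧
      ∀ (Ω : Type) (_ : MeasurableSpace Ω) (μ : Measure Ω), IsProbabilityMeasure μ →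
        ∀ (Z_c : Ω → EuclideanSpace ℝ (Fin m)) (Z_e : Ω → EuclideanSpace ℝ (Fin o))
          (η : Ω → Bool), Measurable Z_c → Measurable Z_e → Measurable η →
          (∀ ω, |⟪w_c, Z_c ω⟫| ≥ c) → (∀ ω, ‖Z_e ω‖ ≤ z_sup) →
          μ {ω | xor (decide ((0:ℝ) ≤ ⟪w_c, Z_c ω⟫)) (η ω)
                  ≠ decide ((0:ℝ) ≤ ⟪w_c, Z_c ω⟫ + ⟪γ, Z_e ω⟫)}
            = μ {ω | η ω = true} := by
  set ε : ℝ := c / (2 * z_sup) with hε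
  have hεpos : 0 < ε := by positivity
  refine ⟨ε • EuclideanSpace.single ⟨0, ho⟩ (1:ℝ), ?_, ?_⟩
  · intro h
    have hn : ‖ε • EuclideanSpace.single (⟨0, ho⟩ : Fin o) (1:ℝ)‖ = ε := by
      simp [norm_smul, abs_of_pos hεpos]
    rw [h, norm_zero] at hn
    exact hεpos.ne hn
  · intro Ω _ μ _ Z_c Z_e η _ _ _ hmargin hbound
    set γ : EuclideanSpace ℝ (Fin o) := ε • EuclideanSpace.single ⟨0, ho⟩ (1:ℝ)
    have hγnorm : ‖γ‖ = ε := by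
      simp [γ, norm_smul, abs_of_pos hεpos]
    congr 1
    ext ω
    have hb : |⟪γ, Z_e ω⟫| ≤ c / 2 := by
      calc |⟪γ, Z_e ω⟫| ≤ ‖γ‖ * ‖Z_e ω‖ := abs_real_inner_le_norm _ _
        _ ≤ ε * z_sup := by
            apply mul_le_mul (le_of_eq hγnorm) (hbound ω) (norm_nonneg _) hεpos.le
        _ = c / 2 := by rw [hε, div_mul_eq_mul_div, mul_div_mul_right _ _ hz.ne']
    have key : (0 ≤ ⟪w_c, Z_c ω⟫) ↔ (0 ≤ ⟪w_c, Z_c ω⟫ + ⟪γ, Z_e ω⟫) := by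
      have ha := hmargin ω
      have hb1 : -(c/2) ≤ ⟪γ, Z_e ω⟫ := neg_le_of_abs_le hb
      have hb2 : ⟪γ, Z_e ω⟫ ≤ c/2 := le_of_abs_le hb
      rcases abs_cases ⟪w_c, Z_c ω⟫ with ⟨h1, h2⟩ | ⟨h1, h2⟩ <;>
        constructor <;> intro h <;> nlinarith
    simp only [Set.mem_setOf_eq]
    rw [decide_eq_decide.mpr key.symm]
    cases η ω <;> cases decide ((0:ℝ) ≤ ⟪w_c, Z_c ω⟫) <;> simp
end

section
/- (ERM places nonzero weight on the spurious feature; population version of the simulated SCM, Equation 5 and Table 1.) Let (Ω, F, μ) be a probability space and let Z_c, η_y, η_e : Ω → ℝ be mutually independent, square-integrable, mean-zero random variables with variances σ² > 0, σ_y² > 0 and s² > 0 respectively. Define Y = Z_c + η_y and Z_e = Y + η_e. Then the function (a, b) ↦ E_μ[(Y − a·Z_c − b·Z_e)²] has a unique minimizer (a*, b*) ∈ ℝ², given by a* = s²/(σ_y² + s²) and b* = σ_y²/(σ_y² + s²); in particular b* > 0 and a* < 1, so the population least-squares (ERM) solution places strictly positive weight on the spurious feature Z_e, whereas the oracle predictor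 uses only Z_c with coefficient 1. -/
open MeasureTheory ProbabilityTheory

/-- population ERM places nonzero weight on the spurious feature: in the
SCM `Y = Z_c + η_y`, `Z_e = Y + η_e` with mutually independent mean-zero square-integrable
noises of variances `σ², σ_y², s²`, the population least-squares objective
`(a, b) ↦ E[(Y − a·Z_c − b·Z_e)²]` has the unique minimizer
`(a*, b*) = (s²/(σ_y² + s²), σ_y²/(σ_y² + s²))`, with `b* > 0` and `a* < 1`. -/
theorem erm_spurious_weight
    {Ω : Type*} [MeasurableSpace Ω] (μ : Measure Ω) [IsProbabilityMeasure μ]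
    (Z_c η_y η_e : Ω → ℝ)
    (hZc : Measurable Z_c) (hηy : Measurable η_y) (hηe : Measurable η_e)
    (hZc2 : MemLp Z_c 2 μ) (hηy2 : MemLp η_y 2 μ) (hηe2 : MemLp η_e 2 μ)
    (hZcMean : ∫ ω, Z_c ω ∂μ = 0) (hηyMean : ∫ ω, η_y ω ∂μ = 0)
    (hηeMean : ∫ ω, η_e ω ∂μ = 0)
    (σ σ_y s : ℝ) (hσ : 0 < σ) (hσy : 0 < σ_y) (hs : 0 < s)
    (hVarZc : ∫ ω, (Z_c ω)^2 ∂μ = σ^2)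
    (hVarηy : ∫ ω, (η_y ω)^2 ∂μ = σ_y^2)
    (hVarηe : ∫ ω, (η_e ω)^2 ∂μ = s^2)
    (hindep₁ : IndepFun Z_c η_y μ)
    (hindep₂ : IndepFun (fun ω => (Z_c ω, η_y ω)) η_e μ) :
    (∀ p : ℝ × ℝ,
      (∫ ω, ((Z_c ω + η_y ω)
          - (s^2 / (σ_y^2 + s^2)) * Z_c ω
          - (σ_y^2 / (σ_y^2 + s^2)) * (Z_c ω + η_y ω + η_e ω))^2 ∂μ)
        ≤ ∫ ω, ((Z_c ω + η_y ω)
          - p.1 * Z_c ω - p.2 * (Z_c ω + η_y ω + η_e ω))^2 ∂μ) ∧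
    (∀ p : ℝ × ℝ,
      (∫ ω, ((Z_c ω + η_y ω)
          - p.1 * Z_c ω - p.2 * (Z_c ω + η_y ω + η_e ω))^2 ∂μ)
        ≤ (∫ ω, ((Z_c ω + η_y ω)
          - (s^2 / (σ_y^2 + s^2)) * Z_c ω
          - (σ_y^2 / (σ_y^2 + s^2)) * (Z_c ω + η_y ω + η_e ω))^2 ∂μ)
        → p = (s^2 / (σ_y^2 + s^2), σ_y^2 / (σ_y^2 + s^2))) ∧
    0 < σ_y^2 / (σ_y^2 + s^2) ∧ s^2 / (σ_y^2 + s^2) < 1 := by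
  have ht0 : (0:ℝ) < σ_y^2 + s^2 := by positivity
  -- derived independences
  have hZcηe : IndepFun Z_c η_e μ := hindep₂.comp measurable_fst measurable_id
  have hηyηe : IndepFun η_y η_e μ := hindep₂.comp measurable_snd measurable_id
  -- integrability
  have iZc : Integrable Z_c μ := hZc2.integrable one_le_two
  have iηy : Integrable η_y μ := hηy2.integrable one_le_two
  have iηe : Integrable η_e μ := hηe2.integrable one_le_two
  have iXY : Integrable (fun ω => Z_c ω * η_y ω) μ := hindep₁.integrable_mul iZc iηy
  have iXZ : Integrable (fun ω => Z_c ω * η_e ω) μ := hZcηe.integrable_mul iZc iηe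
  have iYZ : Integrable (fun ω => η_y ω * η_e ω) μ := hηyηe.integrable_mul iηy iηe
  have hXY : ∫ ω, Z_c ω * η_y ω ∂μ = 0 := by
    have := hindep₁.integral_mul_eq_mul_integral iZc.aestronglyMeasurable iηy.aestronglyMeasurable
    simpa [Pi.mul_apply, hZcMean] using this
  have hXZ : ∫ ω, Z_c ω * η_e ω ∂μ = 0 := by
    have := hZcηe.integral_mul_eq_mul_integral iZc.aestronglyMeasurable iηe.aestronglyMeasurable
    simpa [Pi.mul_apply, hZcMean] using this
  have hYZ : ∫ ω, η_y ω * η_e ω ∂μ = 0 := by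
    have := hηyηe.integral_mul_eq_mul_integral iηy.aestronglyMeasurable iηe.aestronglyMeasurable
    simpa [Pi.mul_apply, hηyMean] using this
  -- key expansion
  have key : ∀ c1 c2 c3 : ℝ, ∫ ω, (c1 * Z_c ω + c2 * η_y ω + c3 * η_e ω)^2 ∂μ
      = c1^2 * σ^2 + c2^2 * σ_y^2 + c3^2 * s^2 := by
    intro c1 c2 c3
    have I1 : Integrable (fun ω => c1^2 * (Z_c ω)^2) μ := hZc2.integrable_sq.const_mul _
    have I2 : Integrable (fun ω => c2^2 * (η_y ω)^2) μ := hηy2.integrable_sq.const_mul _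
    have I3 : Integrable (fun ω => c3^2 * (η_e ω)^2) μ := hηe2.integrable_sq.const_mul _
    have I4 : Integrable (fun ω => (2*c1*c2) * (Z_c ω * η_y ω)) μ := iXY.const_mul _
    have I5 : Integrable (fun ω => (2*c1*c3) * (Z_c ω * η_e ω)) μ := iXZ.const_mul _
    have I6 : Integrable (fun ω => (2*c2*c3) * (η_y ω * η_e ω)) μ := iYZ.const_mul _
    have heq : (fun ω => (c1 * Z_c ω + c2 * η_y ω + c3 * η_e ω)^2)
        = fun ω => c1^2 * (Z_c ω)^2 + (c2^2 * (η_y ω)^2 + (c3^2 * (η_e ω)^2 +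
            ((2*c1*c2) * (Z_c ω * η_y ω) + ((2*c1*c3) * (Z_c ω * η_e ω)
              + (2*c2*c3) * (η_y ω * η_e ω))))) := by
      funext ω; ring
    have e1 : ∫ ω, (c1^2 * (Z_c ω)^2 + (c2^2 * (η_y ω)^2 + (c3^2 * (η_e ω)^2 + ((2*c1*c2) * (Z_c ω * η_y ω) + ((2*c1*c3) * (Z_c ω * η_e ω) + (2*c2*c3) * (η_y ω * η_e ω)))))) ∂μ = ∫ ω, c1^2 * (Z_c ω)^2 ∂μ + ∫ ω, c2^2 * (η_y ω)^2 + (c3^2 * (η_e ω)^2 + ((2*c1*c2) * (Z_c ω * η_y ω) + ((2*c1*c3) * (Z_c ω * η_e ω) + (2*c2*c3) * (η_y ω * η_e ω)))) ∂μ :=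
      integral_add I1 (I2.add (I3.add (I4.add (I5.add I6))))
    have e2 : ∫ ω, (c2^2 * (η_y ω)^2 + (c3^2 * (η_e ω)^2 + ((2*c1*c2) * (Z_c ω * η_y ω) + ((2*c1*c3) * (Z_c ω * η_e ω) + (2*c2*c3) * (η_y ω * η_e ω))))) ∂μ = ∫ ω, c2^2 * (η_y ω)^2 ∂μ + ∫ ω, c3^2 * (η_e ω)^2 + ((2*c1*c2) * (Z_c ω * η_y ω) + ((2*c1*c3) * (Z_c ω * η_e ω) + (2*c2*c3) * (η_y ω * η_e ω))) ∂μ :=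
      integral_add I2 (I3.add (I4.add (I5.add I6)))
    have e3 : ∫ ω, (c3^2 * (η_e ω)^2 + ((2*c1*c2) * (Z_c ω * η_y ω) + ((2*c1*c3) * (Z_c ω * η_e ω) + (2*c2*c3) * (η_y ω * η_e ω)))) ∂μ = ∫ ω, c3^2 * (η_e ω)^2 ∂μ + ∫ ω, (2*c1*c2) * (Z_c ω * η_y ω) + ((2*c1*c3) * (Z_c ω * η_e ω) + (2*c2*c3) * (η_y ω * η_e ω)) ∂μ :=
      integral_add I3 (I4.add (I5.add I6))
    have e4 : ∫ ω, ((2*c1*c2) * (Z_c ω * η_y ω) + ((2*c1*c3) * (Z_c ω * η_e ω) + (2*c2*c3) * (η_y ω * η_e ω))) ∂μ = ∫ ω, (2*c1*c2) * (Z_c ω * η_y ω) ∂μ + ∫ ω, (2*c1*c3) * (Z_c ω * η_e ω) + (2*c2*c3) * (η_y ω * η_e ω) ∂μ :=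
      integral_add I4 (I5.add I6)
    have e5 : ∫ ω, ((2*c1*c3) * (Z_c ω * η_e ω) + (2*c2*c3) * (η_y ω * η_e ω)) ∂μ = ∫ ω, (2*c1*c3) * (Z_c ω * η_e ω) ∂μ + ∫ ω, (2*c2*c3) * (η_y ω * η_e ω) ∂μ :=
      integral_add I5 I6
    rw [heq, e1, e2, e3, e4, e5, integral_const_mul, integral_const_mul, integral_const_mul,
      integral_const_mul, integral_const_mul, integral_const_mul,
      hVarZc, hVarηy, hVarηe, hXY, hXZ, hYZ]
    ring
  have obj : ∀ a b : ℝ, ∫ ω, ((Z_c ω + η_y ω) - a * Z_c ω - b * (Z_c ω + η_y ω + η_e ω))^2 ∂μ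
      = (1-a-b)^2 * σ^2 + (1-b)^2 * σ_y^2 + b^2 * s^2 := by
    intro a b
    calc ∫ ω, ((Z_c ω + η_y ω) - a * Z_c ω - b * (Z_c ω + η_y ω + η_e ω))^2 ∂μ
        = ∫ ω, ((1-a-b) * Z_c ω + (1-b) * η_y ω + (-b) * η_e ω)^2 ∂μ := by
          congr 1; funext ω; ring
      _ = (1-a-b)^2 * σ^2 + (1-b)^2 * σ_y^2 + b^2 * s^2 := by rw [key]; ring
  have hFstar : (1 - s^2/(σ_y^2+s^2) - σ_y^2/(σ_y^2+s^2))^2*σ^2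
      + (1 - σ_y^2/(σ_y^2+s^2))^2*σ_y^2 + (σ_y^2/(σ_y^2+s^2))^2*s^2
      = σ_y^2*s^2/(σ_y^2+s^2) := by
    field_simp
    ring
  have hdecomp : ∀ a b : ℝ, (1-a-b)^2*σ^2 + (1-b)^2*σ_y^2 + b^2*s^2
      = σ_y^2*s^2/(σ_y^2+s^2) + (1-a-b)^2*σ^2 + ((σ_y^2+s^2)*b - σ_y^2)^2/(σ_y^2+s^2) := by
    intro a b
    field_simp
    ring
  refine ⟨?_, ?_, by positivity, ?_⟩
  · intro p
    rw [obj, obj, hFstar, hdecomp p.1 p.2]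
    have h1 : 0 ≤ (1 - p.1 - p.2)^2 * σ^2 := by positivity
    have h2 : 0 ≤ ((σ_y^2+s^2)*p.2 - σ_y^2)^2/(σ_y^2+s^2) := by positivity
    linarith
  · rintro ⟨a, b⟩ hle
    simp only at hle ⊢
    rw [obj, obj, hFstar, hdecomp a b] at hle
    have h1 : 0 ≤ (1 - a - b)^2 * σ^2 := by positivity
    have h2 : 0 ≤ ((σ_y^2+s^2)*b - σ_y^2)^2/(σ_y^2+s^2) := by positivity
    have hb0 : ((σ_y^2+s^2)*b - σ_y^2)^2 = 0 := by
      have : ((σ_y^2+s^2)*b - σ_y^2)^2/(σ_y^2+s^2) ≤ 0 := by linarith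
      have : ((σ_y^2+s^2)*b - σ_y^2)^2 ≤ 0 := by
        rw [div_le_iff₀ ht0] at this; linarith [this]
      exact le_antisymm this (sq_nonneg _)
    have hbval : b = σ_y^2/(σ_y^2+s^2) := by
      have hb1 : (σ_y^2+s^2)*b - σ_y^2 = 0 := by
        have := sq_eq_zero_iff.mp hb0; exact this
      field_simp
      linarith
    have ha0 : (1 - a - b)^2 = 0 := by
      have h3 : (1 - a - b)^2 * σ^2 ≤ 0 := by linarith
      have hσ2 : (0:ℝ) < σ^2 := by positivity
      have h4 : (1 - a - b)^2 ≤ 0 :=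
        le_of_mul_le_mul_right (by linarith : (1-a-b)^2 * σ^2 ≤ 0 * σ^2) hσ2
      exact le_antisymm h4 (sq_nonneg _)
    have haval : a = s^2/(σ_y^2+s^2) := by
      have h5 : 1 - a - b = 0 := sq_eq_zero_iff.mp ha0
      rw [hbval] at h5
      field_simp at h5 ⊢
      linarith
    simp [haval, hbval]
  · rw [div_lt_one ht0]
    nlinarith
end
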